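/- (Lemma 4.3 of the paper, key identity.) For every β = 1, …, n−1 and every (w,ζ) ∈ ℂ^{n−1} × ℂ with ζ ≠ 0, the function G(w,ζ) = Y⁰(w)/ζ satisfies e_β̄(G)(w,ζ) = (Σ_{α=1}^{n−1} Y^α(w)·g_{αβ̄}(w))/ζ. -/

import Mathlib

noncomputable section

/-- Wirtinger derivative `∂f/∂u(a)` of `f` at `a` along the complex direction `e`:
`(1/2)(Df(a)[e] − i·Df(a)[i·e])`, with `Df` the real Fréchet derivative. -/
def wirt {E : Type*} [NormedAddCommGroup E] [NormedSpace ℂ E]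
    (f : E → ℂ) (a e : E) : ℂ :=
  (1 / 2) * (fderiv ℝ f a e - Complex.I * fderiv ℝ f a (Complex.I • e))

/-- Conjugate Wirtinger derivative `∂f/∂ū(a)` of `f` at `a` along the complex direction `e`:
`(1/2)(Df(a)[e] + i·Df(a)[i·e])`. -/
def wirtBar {E : Type*} [NormedAddCommGroup E] [NormedSpace ℂ E]
    (f : E → ℂ) (a e : E) : ℂ :=
  (1 / 2) * (fderiv ℝ f a e + Complex.I * fderiv ℝ f a (Complex.I • e))

/-- `N(w) = 1 + Σ_γ |w^γ|²`. -/
def Nfun {m : ℕ} (w : Fin m → ℂ) : ℝ := 1 + ∑ γ, Complex.normSq (w γ)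

/-- `L(w) = log(ρ(w)²) + log N(w)`. -/
def Lfun {m : ℕ} (ρ : (Fin m → ℂ) → ℝ) (w : Fin m → ℂ) : ℝ :=
  Real.log (ρ w ^ 2) + Real.log (Nfun w)

/-- `g_{αβ̄}(w) = ∂²L/∂w^α∂w̄^β(w)`. -/
def gfun {m : ℕ} (ρ : (Fin m → ℂ) → ℝ) (α β : Fin m) (w : Fin m → ℂ) : ℂ :=
  wirt (fun w' => wirtBar (fun w'' => ((Lfun ρ w'' : ℝ) : ℂ)) w' (Pi.single β 1))
    w (Pi.single α 1)

/-- The operator `Z(F) = ζ·∂F/∂ζ` on functions of `(w, ζ) ∈ ℂ^m × ℂ`. -/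
def Zop {m : ℕ} (F : (Fin m → ℂ) × ℂ → ℂ) (p : (Fin m → ℂ) × ℂ) : ℂ :=
  p.2 * wirt F p (0, 1)

/-- The operator `Z̄(F) = ζ̄·∂F/∂ζ̄`. -/
def ZbarOp {m : ℕ} (F : (Fin m → ℂ) × ℂ → ℂ) (p : (Fin m → ℂ) × ℂ) : ℂ :=
  (starRingEnd ℂ) p.2 * wirtBar F p (0, 1)

/-- The adapted polar frame operator
`e_α(F) = ∂F/∂w^α − (∂(log ρ²)/∂w^α)·ζ·∂F/∂ζ + (1/2)(∂(log N)/∂w^α)·(ζ̄·∂F/∂ζ̄ − ζ·∂F/∂ζ)`. -/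
def eOp {m : ℕ} (ρ : (Fin m → ℂ) → ℝ) (α : Fin m)
    (F : (Fin m → ℂ) × ℂ → ℂ) (p : (Fin m → ℂ) × ℂ) : ℂ :=
  wirt F p (Pi.single α 1, 0)
    - wirt (fun w => ((Real.log (ρ w ^ 2) : ℝ) : ℂ)) p.1 (Pi.single α 1)
        * (p.2 * wirt F p (0, 1))
    + (1 / 2) * wirt (fun w => ((Real.log (Nfun w) : ℝ) : ℂ)) p.1 (Pi.single α 1)
        * ((starRingEnd ℂ) p.2 * wirtBar F p (0, 1) - p.2 * wirt F p (0, 1))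

/-- The adapted polar frame operator
`e_ᾱ(F) = ∂F/∂w̄^α − (∂(log ρ²)/∂w̄^α)·ζ̄·∂F/∂ζ̄ + (1/2)(∂(log N)/∂w̄^α)·(ζ·∂F/∂ζ − ζ̄·∂F/∂ζ̄)`. -/
def eBarOp {m : ℕ} (ρ : (Fin m → ℂ) → ℝ) (α : Fin m)
    (F : (Fin m → ℂ) × ℂ → ℂ) (p : (Fin m → ℂ) × ℂ) : ℂ :=
  wirtBar F p (Pi.single α 1, 0)
    - wirtBar (fun w => ((Real.log (ρ w ^ 2) : ℝ) : ℂ)) p.1 (Pi.single α 1)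
        * ((starRingEnd ℂ) p.2 * wirtBar F p (0, 1))
    + (1 / 2) * wirtBar (fun w => ((Real.log (Nfun w) : ℝ) : ℂ)) p.1 (Pi.single α 1)
        * (p.2 * wirt F p (0, 1) - (starRingEnd ℂ) p.2 * wirtBar F p (0, 1))

/-- `Y^α(w) = (v^α − vⁿ·w^α)·√N(w)`, where `ℂⁿ = ℂ^{m+1}` and `α` ranges in `Fin m`. -/
def Yfun {m : ℕ} (v : Fin (m + 1) → ℂ) (α : Fin m) (w : Fin m → ℂ) : ℂ :=
  (v α.castSucc - v (Fin.last m) * w α) * (Real.sqrt (Nfun w) : ℂ)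

/-- `Y⁰(w) = vⁿ·√N(w) + Σ_α Y^α(w)·∂L/∂w^α(w)`. -/
def Y0fun {m : ℕ} (ρ : (Fin m → ℂ) → ℝ) (v : Fin (m + 1) → ℂ) (w : Fin m → ℂ) : ℂ :=
  v (Fin.last m) * (Real.sqrt (Nfun w) : ℂ)
    + ∑ α, Yfun v α w * wirt (fun w' => ((Lfun ρ w' : ℝ) : ℂ)) w (Pi.single α 1)

section basic
variable {E : Type*} [NormedAddCommGroup E] [NormedSpace ℂ E]
  {f g : E → ℂ} {a e : E}

lemma wirt_add (hf : DifferentiableAt ℝ f a) (hg : DifferentiableAt ℝ g a) :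
    wirt (fun x => f x + g x) a e = wirt f a e + wirt g a e := by
  simp only [wirt, fderiv_fun_add hf hg, ContinuousLinearMap.add_apply]; ring

lemma wirtBar_add (hf : DifferentiableAt ℝ f a) (hg : DifferentiableAt ℝ g a) :
    wirtBar (fun x => f x + g x) a e = wirtBar f a e + wirtBar g a e := by
  simp only [wirtBar, fderiv_fun_add hf hg, ContinuousLinearMap.add_apply]; ring

lemma wirt_sub (hf : DifferentiableAt ℝ f a) (hg : DifferentiableAt ℝ g a) :
    wirt (fun x => f x - g x) a e = wirt f a e - wirt g a e := by
  simp only [wirt, fderiv_fun_sub hf hg, ContinuousLinearMap.sub_apply]; ring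

lemma wirtBar_sub (hf : DifferentiableAt ℝ f a) (hg : DifferentiableAt ℝ g a) :
    wirtBar (fun x => f x - g x) a e = wirtBar f a e - wirtBar g a e := by
  simp only [wirtBar, fderiv_fun_sub hf hg, ContinuousLinearMap.sub_apply]; ring

lemma wirt_const (c : ℂ) : wirt (fun _ => c) a e = 0 := by
  simp [wirt]

lemma wirtBar_const (c : ℂ) : wirtBar (fun _ => c) a e = 0 := by
  simp [wirtBar]

lemma wirt_const_mul (hf : DifferentiableAt ℝ f a) (c : ℂ) :
    wirt (fun x => c * f x) a e = c * wirt f a e := by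
  simp only [wirt, fderiv_const_mul hf c, ContinuousLinearMap.smul_apply, smul_eq_mul]; ring

lemma wirtBar_const_mul (hf : DifferentiableAt ℝ f a) (c : ℂ) :
    wirtBar (fun x => c * f x) a e = c * wirtBar f a e := by
  simp only [wirtBar, fderiv_const_mul hf c, ContinuousLinearMap.smul_apply, smul_eq_mul]; ring

lemma wirt_mul (hf : DifferentiableAt ℝ f a) (hg : DifferentiableAt ℝ g a) :
    wirt (fun x => f x * g x) a e = f a * wirt g a e + g a * wirt f a e := by
  simp only [wirt, fderiv_fun_mul hf hg, ContinuousLinearMap.add_apply,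
    ContinuousLinearMap.smul_apply, smul_eq_mul]; ring

lemma wirtBar_mul (hf : DifferentiableAt ℝ f a) (hg : DifferentiableAt ℝ g a) :
    wirtBar (fun x => f x * g x) a e = f a * wirtBar g a e + g a * wirtBar f a e := by
  simp only [wirtBar, fderiv_fun_mul hf hg, ContinuousLinearMap.add_apply,
    ContinuousLinearMap.smul_apply, smul_eq_mul]; ring

lemma wirt_sum {ι : Type*} (s : Finset ι) (A : ι → E → ℂ)
    (h : ∀ i ∈ s, DifferentiableAt ℝ (A i) a) :
    wirt (fun x => ∑ i ∈ s, A i x) a e = ∑ i ∈ s, wirt (A i) a e := by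
  simp only [wirt, fderiv_fun_sum h, ContinuousLinearMap.coe_sum', Finset.sum_apply]
  rw [Finset.mul_sum, ← Finset.sum_sub_distrib, Finset.mul_sum]

lemma wirtBar_sum {ι : Type*} (s : Finset ι) (A : ι → E → ℂ)
    (h : ∀ i ∈ s, DifferentiableAt ℝ (A i) a) :
    wirtBar (fun x => ∑ i ∈ s, A i x) a e = ∑ i ∈ s, wirtBar (A i) a e := by
  simp only [wirtBar, fderiv_fun_sum h, ContinuousLinearMap.coe_sum', Finset.sum_apply]
  rw [Finset.mul_sum, ← Finset.sum_add_distrib, Finset.mul_sum]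

end basic

section real
variable {E : Type*} [NormedAddCommGroup E] [NormedSpace ℂ E]
  {r : E → ℝ} {a e : E}

lemma fderiv_ofReal_comp (hr : DifferentiableAt ℝ r a) (u : E) :
    fderiv ℝ (fun x => ((r x : ℝ) : ℂ)) a u = ((fderiv ℝ r a u : ℝ) : ℂ) := by
  have h : fderiv ℝ (fun x => ((r x : ℝ) : ℂ)) a
      = Complex.ofRealCLM.comp (fderiv ℝ r a) :=
    (Complex.ofRealCLM.hasFDerivAt.comp a hr.hasFDerivAt).fderiv
  rw [h]; rfl

lemma diff_ofReal_comp (hr : DifferentiableAt ℝ r a) :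
    DifferentiableAt ℝ (fun x => ((r x : ℝ) : ℂ)) a :=
  Complex.ofRealCLM.differentiableAt.comp a hr

lemma wirt_ofReal (hr : DifferentiableAt ℝ r a) :
    wirt (fun x => ((r x : ℝ) : ℂ)) a e
      = (1 / 2) * (((fderiv ℝ r a e : ℝ) : ℂ)
          - Complex.I * ((fderiv ℝ r a (Complex.I • e) : ℝ) : ℂ)) := by
  rw [wirt, fderiv_ofReal_comp hr, fderiv_ofReal_comp hr]

lemma wirtBar_ofReal (hr : DifferentiableAt ℝ r a) :
    wirtBar (fun x => ((r x : ℝ) : ℂ)) a e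
      = (1 / 2) * (((fderiv ℝ r a e : ℝ) : ℂ)
          + Complex.I * ((fderiv ℝ r a (Complex.I • e) : ℝ) : ℂ)) := by
  rw [wirtBar, fderiv_ofReal_comp hr, fderiv_ofReal_comp hr]

lemma fderiv_real_comp {φ : ℝ → ℝ} {c : ℝ} (hφ : HasDerivAt φ c (r a))
    (hr : DifferentiableAt ℝ r a) (u : E) :
    fderiv ℝ (fun x => φ (r x)) a u = c * fderiv ℝ r a u := by
  have h : fderiv ℝ (fun x => φ (r x)) a = c • (fderiv ℝ r a) :=
    (hφ.comp_hasFDerivAt a hr.hasFDerivAt).fderiv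
  rw [h]; simp

lemma wirt_comp_real {φ : ℝ → ℝ} {c : ℝ} (hφ : HasDerivAt φ c (r a))
    (hr : DifferentiableAt ℝ r a) :
    wirt (fun x => ((φ (r x) : ℝ) : ℂ)) a e
      = (c : ℂ) * wirt (fun x => ((r x : ℝ) : ℂ)) a e := by
  have hd : DifferentiableAt ℝ (fun x => φ (r x)) a :=
    (hφ.comp_hasFDerivAt a hr.hasFDerivAt).differentiableAt
  rw [wirt_ofReal hd, wirt_ofReal hr, fderiv_real_comp hφ hr, fderiv_real_comp hφ hr]
  push_cast; ring

lemma wirtBar_comp_real {φ : ℝ → ℝ} {c : ℝ} (hφ : HasDerivAt φ c (r a))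
    (hr : DifferentiableAt ℝ r a) :
    wirtBar (fun x => ((φ (r x) : ℝ) : ℂ)) a e
      = (c : ℂ) * wirtBar (fun x => ((r x : ℝ) : ℂ)) a e := by
  have hd : DifferentiableAt ℝ (fun x => φ (r x)) a :=
    (hφ.comp_hasFDerivAt a hr.hasFDerivAt).differentiableAt
  rw [wirtBar_ofReal hd, wirtBar_ofReal hr, fderiv_real_comp hφ hr, fderiv_real_comp hφ hr]
  push_cast; ring

end real

section symm
variable {E : Type*} [NormedAddCommGroup E] [NormedSpace ℂ E] {h : E → ℝ}

lemma diff_fderiv_apply (hh : ContDiff ℝ 2 h) (v : E) :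
    Differentiable ℝ (fun y => fderiv ℝ h y v) := by
  have h1 : ContDiff ℝ 1 (fderiv ℝ h) := hh.fderiv_right (m := 1) (by norm_num)
  exact (ContinuousLinearMap.apply ℝ ℝ v).differentiable.comp (h1.differentiable (by norm_num))

lemma fderiv_fderiv_apply (hh : ContDiff ℝ 2 h) (x u v : E) :
    fderiv ℝ (fun y => fderiv ℝ h y v) x u = fderiv ℝ (fderiv ℝ h) x u v := by
  have h1 : ContDiff ℝ 1 (fderiv ℝ h) := hh.fderiv_right (m := 1) (by norm_num)
  have hd : DifferentiableAt ℝ (fderiv ℝ h) x := (h1.differentiable (by norm_num)).differentiableAt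
  have h2 := ((ContinuousLinearMap.apply ℝ ℝ v).hasFDerivAt.comp x hd.hasFDerivAt).fderiv
  have h3 : fderiv ℝ (fun y => fderiv ℝ h y v) x
      = ((ContinuousLinearMap.apply ℝ ℝ v)).comp (fderiv ℝ (fderiv ℝ h) x) := h2
  rw [h3]; rfl

lemma snd_symm (hh : ContDiff ℝ 2 h) (x u v : E) :
    fderiv ℝ (fun y => fderiv ℝ h y v) x u = fderiv ℝ (fun y => fderiv ℝ h y u) x v := by
  rw [fderiv_fderiv_apply hh, fderiv_fderiv_apply hh]
  exact hh.contDiffAt.isSymmSndFDerivAt (by norm_num) u v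

lemma wirt_wirtBar_comm (hh : ContDiff ℝ 2 h) (x u v : E) :
    wirt (fun y => wirtBar (fun z => ((h z : ℝ) : ℂ)) y v) x u
      = wirtBar (fun y => wirt (fun z => ((h z : ℝ) : ℂ)) y u) x v := by
  have hd : ∀ y, DifferentiableAt ℝ h y := fun y =>
    (hh.differentiable (by norm_num)).differentiableAt
  have hg : ∀ e, Differentiable ℝ (fun y => fderiv ℝ h y e) := diff_fderiv_apply hh
  have hgc : ∀ (e : E) (y : E),
      DifferentiableAt ℝ (fun z => ((fderiv ℝ h z e : ℝ) : ℂ)) y := fun e y =>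
    diff_ofReal_comp ((hg e).differentiableAt)
  have e1 : (fun y => wirtBar (fun z => ((h z : ℝ) : ℂ)) y v)
      = fun y => (1/2 : ℂ) * (((fderiv ℝ h y v : ℝ) : ℂ)
          + Complex.I * ((fderiv ℝ h y (Complex.I • v) : ℝ) : ℂ)) :=
    funext fun y => wirtBar_ofReal (hd y)
  have e2 : (fun y => wirt (fun z => ((h z : ℝ) : ℂ)) y u)
      = fun y => (1/2 : ℂ) * (((fderiv ℝ h y u : ℝ) : ℂ)
          - Complex.I * ((fderiv ℝ h y (Complex.I • u) : ℝ) : ℂ)) :=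
    funext fun y => wirt_ofReal (hd y)
  rw [e1, e2]
  have dsum1 : ∀ e₁ e₂ : E, DifferentiableAt ℝ
      (fun y => ((fderiv ℝ h y e₁ : ℝ) : ℂ)
        + Complex.I * ((fderiv ℝ h y e₂ : ℝ) : ℂ)) x :=
    fun e₁ e₂ => (hgc e₁ x).add ((hgc e₂ x).const_mul _)
  have dsum2 : ∀ e₁ e₂ : E, DifferentiableAt ℝ
      (fun y => ((fderiv ℝ h y e₁ : ℝ) : ℂ)
        - Complex.I * ((fderiv ℝ h y e₂ : ℝ) : ℂ)) x :=
    fun e₁ e₂ => (hgc e₁ x).sub ((hgc e₂ x).const_mul _)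
  rw [wirt_const_mul (dsum1 v (Complex.I • v)), wirtBar_const_mul (dsum2 u (Complex.I • u))]
  rw [wirt_add (hgc v x) ((hgc (Complex.I • v) x).const_mul _),
    wirtBar_sub (hgc u x) ((hgc (Complex.I • u) x).const_mul _)]
  rw [wirt_const_mul (hgc (Complex.I • v) x), wirtBar_const_mul (hgc (Complex.I • u) x)]
  rw [wirt_ofReal ((hg v).differentiableAt), wirt_ofReal ((hg (Complex.I • v)).differentiableAt),
    wirtBar_ofReal ((hg u).differentiableAt),
    wirtBar_ofReal ((hg (Complex.I • u)).differentiableAt)]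
  rw [snd_symm hh x u v, snd_symm hh x u (Complex.I • v),
      snd_symm hh x (Complex.I • u) v, snd_symm hh x (Complex.I • u) (Complex.I • v)]
  ring

end symm

section coords
variable {m : ℕ} {a : Fin m → ℂ} {β γ : Fin m}

lemma diff_coord : Differentiable ℝ (fun w : Fin m → ℂ => w γ) :=
  (ContinuousLinearMap.proj (R := ℝ) (φ := fun _ : Fin m => ℂ) γ).differentiable

lemma fderiv_coord (u : Fin m → ℂ) :
    fderiv ℝ (fun w : Fin m → ℂ => w γ) a u = u γ := by
  have h : (fun w : Fin m → ℂ => w γ)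
      = ⇑(ContinuousLinearMap.proj (R := ℝ) (φ := fun _ : Fin m => ℂ) γ) := rfl
  rw [h, ContinuousLinearMap.fderiv]; rfl

lemma diff_conj_coord : Differentiable ℝ (fun w : Fin m → ℂ => (starRingEnd ℂ) (w γ)) :=
  (Complex.conjCLE.toContinuousLinearMap.comp
    (ContinuousLinearMap.proj (R := ℝ) (φ := fun _ : Fin m => ℂ) γ)).differentiable

lemma fderiv_conj_coord (u : Fin m → ℂ) :
    fderiv ℝ (fun w : Fin m → ℂ => (starRingEnd ℂ) (w γ)) a u = (starRingEnd ℂ) (u γ) := by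
  have h : (fun w : Fin m → ℂ => (starRingEnd ℂ) (w γ))
      = ⇑(Complex.conjCLE.toContinuousLinearMap.comp
          (ContinuousLinearMap.proj (R := ℝ) (φ := fun _ : Fin m => ℂ) γ)) := rfl
  rw [h, ContinuousLinearMap.fderiv]; rfl

lemma smul_single_apply : (Complex.I • (Pi.single β 1 : Fin m → ℂ)) γ = Complex.I * (Pi.single β 1 : Fin m → ℂ) γ := by
  simp

lemma wirt_coord : wirt (fun w : Fin m → ℂ => w γ) a (Pi.single β 1) = (Pi.single β 1 : Fin m → ℂ) γ := by
  rw [wirt, fderiv_coord, fderiv_coord, smul_single_apply]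
  ring_nf
  rw [Complex.I_sq]; ring

lemma wirtBar_coord : wirtBar (fun w : Fin m → ℂ => w γ) a (Pi.single β 1) = 0 := by
  rw [wirtBar, fderiv_coord, fderiv_coord, smul_single_apply]
  ring_nf
  rw [Complex.I_sq]; ring

lemma wirt_conj_coord :
    wirt (fun w : Fin m → ℂ => (starRingEnd ℂ) (w γ)) a (Pi.single β 1) = 0 := by
  rw [wirt, fderiv_conj_coord, fderiv_conj_coord, smul_single_apply, map_mul]
  simp only [Complex.conj_I]
  have h : (starRingEnd ℂ) ((Pi.single β 1 : Fin m → ℂ) γ) = (Pi.single β 1 : Fin m → ℂ) γ := by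
    by_cases hh : γ = β <;> simp [Pi.single_apply, hh]
  rw [h]; ring_nf; rw [Complex.I_sq]; ring

lemma wirtBar_conj_coord :
    wirtBar (fun w : Fin m → ℂ => (starRingEnd ℂ) (w γ)) a (Pi.single β 1)
      = (Pi.single β 1 : Fin m → ℂ) γ := by
  rw [wirtBar, fderiv_conj_coord, fderiv_conj_coord, smul_single_apply, map_mul]
  simp only [Complex.conj_I]
  have h : (starRingEnd ℂ) ((Pi.single β 1 : Fin m → ℂ) γ) = (Pi.single β 1 : Fin m → ℂ) γ := by
    by_cases hh : γ = β <;> simp [Pi.single_apply, hh]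
  rw [h]; ring_nf; rw [Complex.I_sq]; ring

end coords

section Nsec
variable {m : ℕ}

lemma contDiff_Nfun (n : ℕ∞) : ContDiff ℝ n (Nfun (m := m)) := by
  unfold Nfun
  apply ContDiff.add contDiff_const
  apply ContDiff.sum; intro γ _
  have h1 : ContDiff ℝ n (fun w : Fin m → ℂ => w γ) :=
    (ContinuousLinearMap.proj (R := ℝ) (φ := fun _ : Fin m => ℂ) γ).contDiff
  have h2 : (fun w : Fin m → ℂ => Complex.normSq (w γ))
      = fun w => (w γ).re * (w γ).re + (w γ).im * (w γ).im := by
    funext w; rw [Complex.normSq_apply]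
  rw [h2]
  exact ((Complex.reCLM.contDiff.comp h1).mul (Complex.reCLM.contDiff.comp h1)).add
    ((Complex.imCLM.contDiff.comp h1).mul (Complex.imCLM.contDiff.comp h1))

lemma Nfun_pos (w : Fin m → ℂ) : 0 < Nfun w := by
  have h : 0 ≤ ∑ γ, Complex.normSq (w γ) :=
    Finset.sum_nonneg fun _ _ => Complex.normSq_nonneg _
  unfold Nfun; linarith

lemma diff_Nfun : Differentiable ℝ (Nfun (m := m)) :=
  (contDiff_Nfun 1).differentiable (by norm_num)

lemma Nc_eq : (fun w : Fin m → ℂ => ((Nfun w : ℝ) : ℂ))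
    = fun w => 1 + ∑ γ, w γ * (starRingEnd ℂ) (w γ) := by
  funext w
  unfold Nfun
  push_cast
  congr 1
  exact Finset.sum_congr rfl fun γ _ => (Complex.mul_conj (w γ)).symm

lemma wirtBar_Nc (w : Fin m → ℂ) (β : Fin m) :
    wirtBar (fun w' => ((Nfun w' : ℝ) : ℂ)) w (Pi.single β 1) = w β := by
  rw [Nc_eq]
  have hprod : ∀ γ : Fin m, DifferentiableAt ℝ
      (fun w' : Fin m → ℂ => w' γ * (starRingEnd ℂ) (w' γ)) w :=
    fun γ => (diff_coord.differentiableAt).mul (diff_conj_coord.differentiableAt)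
  have hsum : DifferentiableAt ℝ
      (fun w' : Fin m → ℂ => ∑ γ, w' γ * (starRingEnd ℂ) (w' γ)) w :=
    DifferentiableAt.fun_sum fun γ _ => hprod γ
  rw [wirtBar_add (differentiableAt_const 1) hsum, wirtBar_const,
    wirtBar_sum Finset.univ _ fun γ _ => hprod γ]
  have h1 : ∀ γ : Fin m,
      wirtBar (fun w' : Fin m → ℂ => w' γ * (starRingEnd ℂ) (w' γ)) w (Pi.single β 1)
        = w γ * (Pi.single β 1 : Fin m → ℂ) γ := by
    intro γ
    rw [wirtBar_mul (diff_coord.differentiableAt) (diff_conj_coord.differentiableAt),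
      wirtBar_coord, wirtBar_conj_coord]
    ring
  rw [Finset.sum_congr rfl fun γ _ => h1 γ]
  simp [Pi.single_apply, mul_ite]

lemma wirtBar_logN (w : Fin m → ℂ) (β : Fin m) :
    wirtBar (fun w' => ((Real.log (Nfun w') : ℝ) : ℂ)) w (Pi.single β 1)
      = (((Nfun w)⁻¹ : ℝ) : ℂ) * w β := by
  rw [wirtBar_comp_real (Real.hasDerivAt_log (Nfun_pos w).ne') diff_Nfun.differentiableAt,
    wirtBar_Nc]

lemma wirtBar_sqrtN (w : Fin m → ℂ) (β : Fin m) :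
    wirtBar (fun w' => ((Real.sqrt (Nfun w') : ℝ) : ℂ)) w (Pi.single β 1)
      = ((1 / (2 * Real.sqrt (Nfun w)) : ℝ) : ℂ) * w β := by
  rw [wirtBar_comp_real (Real.hasDerivAt_sqrt (Nfun_pos w).ne') diff_Nfun.differentiableAt,
    wirtBar_Nc]

lemma contDiff_Lfun {ρ : (Fin m → ℂ) → ℝ} (hρpos : ∀ w, 0 < ρ w) (hρ : ContDiff ℝ 2 ρ) :
    ContDiff ℝ 2 (Lfun ρ) := by
  unfold Lfun
  apply ContDiff.add
  · exact (hρ.pow 2).log fun w => (pow_pos (hρpos w) 2).ne'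
  · exact (contDiff_Nfun 2).log fun w => (Nfun_pos w).ne'

end Nsec

section prodsec
variable {E : Type*} [NormedAddCommGroup E] [NormedSpace ℂ E] {f : E → ℂ} {w : E} {ζ : ℂ}

lemma fderiv_fst_comp (hf : DifferentiableAt ℝ f w) (ζ : ℂ) (q : E × ℂ) :
    fderiv ℝ (fun p : E × ℂ => f p.1) (w, ζ) q = fderiv ℝ f w q.1 := by
  have h : fderiv ℝ (fun p : E × ℂ => f p.1) (w, ζ)
      = (fderiv ℝ f w).comp (ContinuousLinearMap.fst ℝ E ℂ) :=
    (hf.hasFDerivAt.comp (w, ζ) hasFDerivAt_fst).fderiv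
  rw [h]; rfl

lemma wirt_fst (hf : DifferentiableAt ℝ f w) (e : E) :
    wirt (fun p : E × ℂ => f p.1) (w, ζ) (e, 0) = wirt f w e := by
  rw [wirt, wirt, fderiv_fst_comp hf, Prod.smul_mk, smul_zero, fderiv_fst_comp hf]

lemma wirtBar_fst (hf : DifferentiableAt ℝ f w) (e : E) :
    wirtBar (fun p : E × ℂ => f p.1) (w, ζ) (e, 0) = wirtBar f w e := by
  rw [wirtBar, wirtBar, fderiv_fst_comp hf, Prod.smul_mk, smul_zero, fderiv_fst_comp hf]

lemma wirt_fst_snddir (hf : DifferentiableAt ℝ f w) :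
    wirt (fun p : E × ℂ => f p.1) (w, ζ) ((0 : E), (1 : ℂ)) = 0 := by
  rw [wirt, fderiv_fst_comp hf, Prod.smul_mk, smul_zero, fderiv_fst_comp hf]
  simp

lemma wirtBar_fst_snddir (hf : DifferentiableAt ℝ f w) :
    wirtBar (fun p : E × ℂ => f p.1) (w, ζ) ((0 : E), (1 : ℂ)) = 0 := by
  rw [wirtBar, fderiv_fst_comp hf, Prod.smul_mk, smul_zero, fderiv_fst_comp hf]
  simp

lemma hasFDeriv_inv_snd (hζ : ζ ≠ 0) :
    HasFDerivAt (fun p : E × ℂ => p.2⁻¹)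
      ((((ContinuousLinearMap.smulRight (1 : ℂ →L[ℂ] ℂ) (-(ζ ^ 2)⁻¹)).comp
        (ContinuousLinearMap.snd ℂ E ℂ))).restrictScalars ℝ) (w, ζ) :=
  (((hasDerivAt_inv hζ).hasFDerivAt.comp (w, ζ) hasFDerivAt_snd)).restrictScalars ℝ

lemma fderiv_inv_snd (hζ : ζ ≠ 0) (q : E × ℂ) :
    fderiv ℝ (fun p : E × ℂ => p.2⁻¹) (w, ζ) q = q.2 * (-(ζ ^ 2)⁻¹) := by
  rw [(hasFDeriv_inv_snd hζ).fderiv]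
  simp [smul_eq_mul]

lemma diff_inv_snd (hζ : ζ ≠ 0) :
    DifferentiableAt ℝ (fun p : E × ℂ => p.2⁻¹) ((w, ζ) : E × ℂ) :=
  (hasFDeriv_inv_snd hζ).differentiableAt

lemma wirt_inv_snd (hζ : ζ ≠ 0) :
    wirt (fun p : E × ℂ => p.2⁻¹) (w, ζ) ((0 : E), (1 : ℂ)) = -(ζ ^ 2)⁻¹ := by
  rw [wirt, fderiv_inv_snd hζ, Prod.smul_mk, fderiv_inv_snd hζ]
  simp only [smul_eq_mul, mul_one]
  ring_nf
  rw [Complex.I_sq]; ring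

lemma wirtBar_inv_snd (hζ : ζ ≠ 0) :
    wirtBar (fun p : E × ℂ => p.2⁻¹) (w, ζ) ((0 : E), (1 : ℂ)) = 0 := by
  rw [wirtBar, fderiv_inv_snd hζ, Prod.smul_mk, fderiv_inv_snd hζ]
  simp only [smul_eq_mul, mul_one]
  ring_nf
  rw [Complex.I_sq]; ring

lemma wirt_inv_snd_fstdir (hζ : ζ ≠ 0) (e : E) :
    wirt (fun p : E × ℂ => p.2⁻¹) (w, ζ) (e, (0 : ℂ)) = 0 := by
  rw [wirt, fderiv_inv_snd hζ, Prod.smul_mk, fderiv_inv_snd hζ]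
  simp

lemma wirtBar_inv_snd_fstdir (hζ : ζ ≠ 0) (e : E) :
    wirtBar (fun p : E × ℂ => p.2⁻¹) (w, ζ) (e, (0 : ℂ)) = 0 := by
  rw [wirtBar, fderiv_inv_snd hζ, Prod.smul_mk, fderiv_inv_snd hζ]
  simp

lemma wirtBar_div_fst (hf : DifferentiableAt ℝ f w) (hζ : ζ ≠ 0) (e : E) :
    wirtBar (fun p : E × ℂ => f p.1 / p.2) (w, ζ) (e, 0)
      = ζ⁻¹ * wirtBar f w e := by
  have hG : (fun p : E × ℂ => f p.1 / p.2)
      = fun p : E × ℂ => (fun q : E × ℂ => f q.1) p * (fun q : E × ℂ => q.2⁻¹) p :=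
    funext fun p => div_eq_mul_inv _ _
  have hf1 : DifferentiableAt ℝ (fun q : E × ℂ => f q.1) (w, ζ) :=
    hf.comp _ differentiableAt_fst
  rw [hG, wirtBar_mul hf1 (diff_inv_snd hζ),
    wirtBar_inv_snd_fstdir hζ, wirtBar_fst hf]
  ring

lemma wirt_div_snddir (hf : DifferentiableAt ℝ f w) (hζ : ζ ≠ 0) :
    wirt (fun p : E × ℂ => f p.1 / p.2) (w, ζ) ((0 : E), (1 : ℂ))
      = f w * (-(ζ ^ 2)⁻¹) := by
  have hG : (fun p : E × ℂ => f p.1 / p.2)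
      = fun p : E × ℂ => (fun q : E × ℂ => f q.1) p * (fun q : E × ℂ => q.2⁻¹) p :=
    funext fun p => div_eq_mul_inv _ _
  have hf1 : DifferentiableAt ℝ (fun q : E × ℂ => f q.1) (w, ζ) :=
    hf.comp _ differentiableAt_fst
  rw [hG, wirt_mul hf1 (diff_inv_snd hζ),
    wirt_inv_snd hζ, wirt_fst_snddir hf]
  ring

lemma wirtBar_div_snddir (hf : DifferentiableAt ℝ f w) (hζ : ζ ≠ 0) :
    wirtBar (fun p : E × ℂ => f p.1 / p.2) (w, ζ) ((0 : E), (1 : ℂ)) = 0 := by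
  have hG : (fun p : E × ℂ => f p.1 / p.2)
      = fun p : E × ℂ => (fun q : E × ℂ => f q.1) p * (fun q : E × ℂ => q.2⁻¹) p :=
    funext fun p => div_eq_mul_inv _ _
  have hf1 : DifferentiableAt ℝ (fun q : E × ℂ => f q.1) (w, ζ) :=
    hf.comp _ differentiableAt_fst
  rw [hG, wirtBar_mul hf1 (diff_inv_snd hζ),
    wirtBar_inv_snd hζ, wirtBar_fst_snddir hf]
  ring

end prodsec

section main
variable {m : ℕ} {ρ : (Fin m → ℂ) → ℝ} {v : Fin (m + 1) → ℂ}

lemma diff_Sc : Differentiable ℝ (fun w : Fin m → ℂ => ((Real.sqrt (Nfun w) : ℝ) : ℂ)) :=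
  fun w => diff_ofReal_comp
    (((Real.hasDerivAt_sqrt (Nfun_pos w).ne').comp_hasFDerivAt w
      diff_Nfun.differentiableAt.hasFDerivAt).differentiableAt)

lemma diff_Lalpha (hρpos : ∀ w, 0 < ρ w) (hρ : ContDiff ℝ 2 ρ) (α : Fin m) :
    Differentiable ℝ (fun w : Fin m → ℂ =>
      wirt (fun w' => ((Lfun ρ w' : ℝ) : ℂ)) w (Pi.single α 1)) := by
  have hL := contDiff_Lfun hρpos hρ
  have hdL : ∀ y, DifferentiableAt ℝ (Lfun ρ) y := fun y =>
    (hL.differentiable (by norm_num)).differentiableAt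
  have he : (fun w : Fin m → ℂ => wirt (fun w' => ((Lfun ρ w' : ℝ) : ℂ)) w (Pi.single α 1))
      = fun w => (1/2 : ℂ) * (((fderiv ℝ (Lfun ρ) w (Pi.single α 1) : ℝ) : ℂ)
          - Complex.I * ((fderiv ℝ (Lfun ρ) w (Complex.I • (Pi.single α 1 : Fin m → ℂ)) : ℝ) : ℂ)) :=
    funext fun w => wirt_ofReal (hdL w)
  rw [he]
  have d1 : ∀ e, Differentiable ℝ
      (fun w : Fin m → ℂ => ((fderiv ℝ (Lfun ρ) w e : ℝ) : ℂ)) := fun e =>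
    Complex.ofRealCLM.differentiable.comp (diff_fderiv_apply hL e)
  exact ((d1 _).sub ((d1 _).const_mul _)).const_mul _

lemma diff_Yfun (α : Fin m) : Differentiable ℝ (Yfun v α) := by
  unfold Yfun
  exact ((differentiable_const _).sub (diff_coord.const_mul _)).mul diff_Sc

lemma diff_Y0 (hρpos : ∀ w, 0 < ρ w) (hρ : ContDiff ℝ 2 ρ) :
    Differentiable ℝ (Y0fun ρ v) := by
  unfold Y0fun
  exact (diff_Sc.const_mul _).add
    (Differentiable.fun_sum fun α _ => (diff_Yfun α).mul (diff_Lalpha hρpos hρ α))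

lemma wirtBar_Yfun (α β : Fin m) (w : Fin m → ℂ) :
    wirtBar (Yfun v α) w (Pi.single β 1)
      = (v α.castSucc - v (Fin.last m) * w α)
          * (((1 / (2 * Real.sqrt (Nfun w)) : ℝ) : ℂ) * w β) := by
  unfold Yfun
  have hA : DifferentiableAt ℝ
      (fun w' : Fin m → ℂ => v α.castSucc - v (Fin.last m) * w' α) w :=
    (differentiableAt_const _).sub (diff_coord.differentiableAt.const_mul _)
  rw [wirtBar_mul hA diff_Sc.differentiableAt, wirtBar_sqrtN,
    wirtBar_sub (differentiableAt_const _) (diff_coord.differentiableAt.const_mul _),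
    wirtBar_const, wirtBar_const_mul diff_coord.differentiableAt, wirtBar_coord]
  ring

lemma wirtBar_Lalpha (hρpos : ∀ w, 0 < ρ w) (hρ : ContDiff ℝ 2 ρ) (α β : Fin m)
    (w : Fin m → ℂ) :
    wirtBar (fun w' : Fin m → ℂ =>
        wirt (fun w'' => ((Lfun ρ w'' : ℝ) : ℂ)) w' (Pi.single α 1)) w (Pi.single β 1)
      = gfun ρ α β w := by
  rw [gfun, wirt_wirtBar_comm (contDiff_Lfun hρpos hρ) w (Pi.single α 1) (Pi.single β 1)]

lemma wirtBar_Y0 (hρpos : ∀ w, 0 < ρ w) (hρ : ContDiff ℝ 2 ρ) (β : Fin m)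
    (w : Fin m → ℂ) :
    wirtBar (Y0fun ρ v) w (Pi.single β 1)
      = v (Fin.last m) * (((1 / (2 * Real.sqrt (Nfun w)) : ℝ) : ℂ) * w β)
        + ∑ α, (Yfun v α w * gfun ρ α β w
            + wirt (fun w' => ((Lfun ρ w' : ℝ) : ℂ)) w (Pi.single α 1)
              * ((v α.castSucc - v (Fin.last m) * w α)
                  * (((1 / (2 * Real.sqrt (Nfun w)) : ℝ) : ℂ) * w β))) := by
  unfold Y0fun
  have h1 : DifferentiableAt ℝ (fun w : Fin m → ℂ =>
      v (Fin.last m) * ((Real.sqrt (Nfun w) : ℝ) : ℂ)) w :=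
    diff_Sc.differentiableAt.const_mul _
  have h2 : ∀ α : Fin m, DifferentiableAt ℝ (fun w : Fin m → ℂ =>
      Yfun v α w * wirt (fun w' => ((Lfun ρ w' : ℝ) : ℂ)) w (Pi.single α 1)) w :=
    fun α => ((diff_Yfun α).mul (diff_Lalpha hρpos hρ α)).differentiableAt
  rw [wirtBar_add h1 (DifferentiableAt.fun_sum fun α _ => h2 α),
    wirtBar_const_mul diff_Sc.differentiableAt, wirtBar_sqrtN,
    wirtBar_sum Finset.univ _ fun α _ => h2 α]
  congr 1
  apply Finset.sum_congr rfl
  intro α _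
  rw [wirtBar_mul (diff_Yfun α).differentiableAt (diff_Lalpha hρpos hρ α).differentiableAt,
    wirtBar_Lalpha hρpos hρ, wirtBar_Yfun]

end main

/-- **Lemma 4.3 (key identity).** For `G(w,ζ) = Y⁰(w)/ζ` one has
`e_β̄(G)(w,ζ) = (Σ_α Y^α(w)·g_{αβ̄}(w))/ζ` whenever `ζ ≠ 0`.
Here `n = m + 1 ≥ 2`. -/
theorem statement3 (m : ℕ) (hm : 1 ≤ m) (ρ : (Fin m → ℂ) → ℝ)
    (hρpos : ∀ w, 0 < ρ w) (hρ : ContDiff ℝ 2 ρ)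
    (v : Fin (m + 1) → ℂ) :
    ∀ (β : Fin m) (w : Fin m → ℂ) (ζ : ℂ), ζ ≠ 0 →
      eBarOp ρ β (fun p => Y0fun ρ v p.1 / p.2) (w, ζ)
        = (∑ α, Yfun v α w * gfun ρ α β w) / ζ := by
  intro β w ζ hζ
  have hY0 : DifferentiableAt ℝ (Y0fun ρ v) w := (diff_Y0 hρpos hρ).differentiableAt
  unfold eBarOp
  dsimp only
  rw [wirtBar_div_fst hY0 hζ, wirtBar_div_snddir hY0 hζ, wirt_div_snddir hY0 hζ,
    wirtBar_logN, wirtBar_Y0 hρpos hρ]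
  unfold Y0fun Yfun
  have hNpos := Nfun_pos w
  have hspos : 0 < Real.sqrt (Nfun w) := Real.sqrt_pos.2 hNpos
  have hSne : ((Real.sqrt (Nfun w) : ℝ) : ℂ) ≠ 0 := by
    exact_mod_cast Complex.ofReal_ne_zero.2 hspos.ne'
  have hs2 : ((Real.sqrt (Nfun w) : ℝ) : ℂ) * ((Real.sqrt (Nfun w) : ℝ) : ℂ)
      = ((Nfun w : ℝ) : ℂ) := by
    rw [← Complex.ofReal_mul, Real.mul_self_sqrt hNpos.le]
  have e0 : ∑ α : Fin m,
      ((v α.castSucc - v (Fin.last m) * w α) * ((Real.sqrt (Nfun w) : ℝ) : ℂ) * gfun ρ α β w +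
        wirt (fun w' => ((Lfun ρ w' : ℝ) : ℂ)) w (Pi.single α 1) *
          ((v α.castSucc - v (Fin.last m) * w α)
            * (((1 / (2 * Real.sqrt (Nfun w)) : ℝ) : ℂ) * w β)))
      = (∑ α : Fin m, (v α.castSucc - v (Fin.last m) * w α)
            * ((Real.sqrt (Nfun w) : ℝ) : ℂ) * gfun ρ α β w)
        + (((1 / (2 * Real.sqrt (Nfun w)) : ℝ) : ℂ) * w β)
          * ∑ α : Fin m, (v α.castSucc - v (Fin.last m) * w α)
              * wirt (fun w' => ((Lfun ρ w' : ℝ) : ℂ)) w (Pi.single α 1) := by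
    rw [Finset.sum_add_distrib]
    congr 1
    rw [Finset.mul_sum]
    exact Finset.sum_congr rfl fun α _ => by ring
  have e2 : ∑ α : Fin m, (v α.castSucc - v (Fin.last m) * w α)
        * ((Real.sqrt (Nfun w) : ℝ) : ℂ)
        * wirt (fun w' => ((Lfun ρ w' : ℝ) : ℂ)) w (Pi.single α 1)
      = ((Real.sqrt (Nfun w) : ℝ) : ℂ)
        * ∑ α : Fin m, (v α.castSucc - v (Fin.last m) * w α)
            * wirt (fun w' => ((Lfun ρ w' : ℝ) : ℂ)) w (Pi.single α 1) := by
    rw [Finset.mul_sum]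
    exact Finset.sum_congr rfl fun α _ => by ring
  rw [e0, e2]
  generalize (∑ α : Fin m, (v α.castSucc - v (Fin.last m) * w α)
      * ((Real.sqrt (Nfun w) : ℝ) : ℂ) * gfun ρ α β w) = Sg
  generalize (∑ α : Fin m, (v α.castSucc - v (Fin.last m) * w α)
      * wirt (fun w' => ((Lfun ρ w' : ℝ) : ℂ)) w (Pi.single α 1)) = T
  push_cast
  rw [← hs2]
  field_simp
  have hden : ζ * (2 * ((Real.sqrt (Nfun w) : ℝ) : ℂ))
      * (2 * (((Real.sqrt (Nfun w) : ℝ) : ℂ) * ((Real.sqrt (Nfun w) : ℝ) : ℂ)) * ζ ^ 2) ≠ 0 := by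
    exact mul_ne_zero (mul_ne_zero hζ (mul_ne_zero two_ne_zero hSne))
      (mul_ne_zero (mul_ne_zero two_ne_zero (mul_ne_zero hSne hSne)) (pow_ne_zero 2 hζ))
  ring

end
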